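/- arXiv:1706.08175 — 3 statements merged into one kernel-verified Lean document; each statement's English description precedes it below -/
import Mathlib

section
/- Let C be an n×m integer matrix, ℓ a prime, and for each j ≥ 0 let M_j = { x ∈ ℤ_ℓ^m : C x ∈ ℓ^j ℤ_ℓ^n }, and let e_j denote the multiplicity of ℓ^j among the ℓ-elementary divisors of C (with e_0 the ℓ-rank of C). Then e_j equals the 𝔽_ℓ-dimension of the quotient of the reductions mod ℓ: e_j = dim( (M_j + ℓℤ_ℓ^m)/ℓℤ_ℓ^m ) − dim( (M_{j+1} + ℓℤ_ℓ^m)/ℓℤ_ℓ^m ). -/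
open Matrix

/-- The reduction mod `p` of a subset of `ℤ_[p]^m`: the `𝔽_p`-subspace of `𝔽_p^m`
generated by the componentwise reductions of its elements (which, for a
`ℤ_[p]`-submodule, is exactly its image `(M + pℤ_[p]^m)/pℤ_[p]^m`). -/
noncomputable def redBar (p m : ℕ) [Fact p.Prime] (S : Set (Fin m → ℤ_[p])) :
    Submodule (ZMod p) (Fin m → ZMod p) :=
  Submodule.span (ZMod p)
    ((fun x : Fin m → ℤ_[p] => fun i => PadicInt.toZMod (x i)) '' S)

/-- `M_j = {x ∈ ℤ_ℓ^m : C x ∈ ℓ^j ℤ_ℓ^n}`. -/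
def Mset (p n m : ℕ) [Fact p.Prime] (C : Matrix (Fin n) (Fin m) ℤ) (j : ℕ) :
    Set (Fin m → ℤ_[p]) :=
  {x | ∀ i, (p : ℤ_[p]) ^ j ∣ ((C.map (Int.cast : ℤ → ℤ_[p])) *ᵥ x) i}

/-- The multiplicity of `p^a` among the elementary divisors of an integer matrix,
read off from a diagonal form `D` of it: the number of nonzero diagonal entries
of `p`-adic valuation exactly `a`. -/
noncomputable def elemDivCount (p : ℕ) {n m : ℕ} (D : Matrix (Fin n) (Fin m) ℤ) (a : ℕ) : ℕ :=
  Nat.card {ij : Fin n × Fin m // (ij.1 : ℕ) = (ij.2 : ℕ) ∧ D ij.1 ij.2 ≠ 0 ∧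
      (p : ℤ) ^ a ∣ D ij.1 ij.2 ∧ ¬ (p : ℤ) ^ (a + 1) ∣ D ij.1 ij.2}

/-! ### Auxiliary machinery -/

/-- The diagonal entries of an `n × m` matrix, indexed by columns. -/
def dDiag (n : ℕ) {m : ℕ} (D : Matrix (Fin n) (Fin m) ℤ) (k : Fin m) : ℤ :=
  if h : (k : ℕ) < n then D ⟨(k : ℕ), h⟩ k else 0

namespace StmtAux

variable {p : ℕ} [Fact p.Prime]

lemma dvd_mulVec {n m : ℕ} (A : Matrix (Fin n) (Fin m) ℤ_[p]) (v : Fin m → ℤ_[p]) (a : ℤ_[p])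
    (h : ∀ k, a ∣ v k) (i : Fin n) : a ∣ (A *ᵥ v) i := by
  unfold Matrix.mulVec dotProduct
  exact Finset.dvd_sum fun k _ => Dvd.dvd.mul_left (h k) _

lemma isUnit_map_det {n : ℕ} (P : Matrix (Fin n) (Fin n) ℤ) (hP : IsUnit P.det) :
    IsUnit (P.map (Int.cast : ℤ → ℤ_[p])).det := by
  have := (Int.castRingHom ℤ_[p]).map_det P
  rw [show (Int.castRingHom ℤ_[p]).mapMatrix P = P.map (Int.cast : ℤ → ℤ_[p]) from rfl] at this
  rw [← this]
  exact hP.map _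

/-- Transporting `Mset C j` to `Mset (P*C*Q) j` by the change of variables `Q`. -/
lemma Mset_eq_image (p n m : ℕ) [Fact p.Prime] (C : Matrix (Fin n) (Fin m) ℤ)
    (P : Matrix (Fin n) (Fin n) ℤ) (Q : Matrix (Fin m) (Fin m) ℤ)
    (hP : IsUnit P.det) (hQ : IsUnit Q.det) (j : ℕ) :
    Mset p n m C j
      = (fun y => (Q.map (Int.cast : ℤ → ℤ_[p])) *ᵥ y) '' Mset p n m (P * C * Q) j := by
  set Pp := P.map (Int.cast : ℤ → ℤ_[p]) with hPpdef
  set Qp := Q.map (Int.cast : ℤ → ℤ_[p]) with hQpdef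
  set Cp := C.map (Int.cast : ℤ → ℤ_[p]) with hCpdef
  have hPp : IsUnit Pp.det := isUnit_map_det P hP
  have hQp : IsUnit Qp.det := isUnit_map_det Q hQ
  have hDmap : (P * C * Q).map (Int.cast : ℤ → ℤ_[p]) = Pp * Cp * Qp := by
    rw [hPpdef, hQpdef, hCpdef]
    ext i k
    simp only [Matrix.map_apply, Matrix.mul_apply]
    push_cast
    rfl
  ext x
  constructor
  · intro hx
    refine ⟨Qp⁻¹ *ᵥ x, ?_, ?_⟩
    · intro i
      rw [hDmap, mulVec_mulVec, Matrix.mul_assoc (Pp * Cp) Qp Qp⁻¹,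
        Matrix.mul_nonsing_inv Qp hQp, Matrix.mul_one, ← mulVec_mulVec]
      exact dvd_mulVec Pp _ _ hx i
    · show Qp *ᵥ (Qp⁻¹ *ᵥ x) = x
      rw [mulVec_mulVec, Matrix.mul_nonsing_inv Qp hQp, one_mulVec]
  · rintro ⟨y, hy, rfl⟩
    intro i
    have hmat : Cp * Qp = Pp⁻¹ * ((P * C * Q).map (Int.cast : ℤ → ℤ_[p])) := by
      rw [hDmap, ← Matrix.mul_assoc, ← Matrix.mul_assoc, Matrix.nonsing_inv_mul Pp hPp,
        Matrix.one_mul]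
    have key : Cp *ᵥ (Qp *ᵥ y) = Pp⁻¹ *ᵥ (((P * C * Q).map (Int.cast : ℤ → ℤ_[p])) *ᵥ y) := by
      rw [mulVec_mulVec, mulVec_mulVec, hmat]
    show (p : ℤ_[p]) ^ j ∣ (Cp *ᵥ (Qp *ᵥ y)) i
    rw [key]
    exact dvd_mulVec Pp⁻¹ _ _ hy i

/-- Reduction of an image under an integral change of variables. -/
lemma redBar_image (p m : ℕ) [Fact p.Prime] (A : Matrix (Fin m) (Fin m) ℤ_[p])
    (S : Set (Fin m → ℤ_[p])) :
    redBar p m ((fun x => A *ᵥ x) '' S)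
      = Submodule.map ((A.map PadicInt.toZMod).mulVecLin) (redBar p m S) := by
  rw [redBar, redBar, Submodule.map_span]
  congr 1
  rw [← Set.image_comp, ← Set.image_comp]
  apply Set.image_congr'
  intro x
  funext i
  simpa [Matrix.mulVecLin_apply, Function.comp_def] using (RingHom.map_mulVec PadicInt.toZMod A x i)

lemma finrank_map_mulVecLin (p m : ℕ) [Fact p.Prime] (B : Matrix (Fin m) (Fin m) (ZMod p))
    (hB : IsUnit B.det) (N : Submodule (ZMod p) (Fin m → ZMod p)) :
    Module.finrank (ZMod p) (Submodule.map B.mulVecLin N) = Module.finrank (ZMod p) N := by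
  have hinj : Function.Injective B.mulVecLin := by
    intro x y hxy
    have h1 : B⁻¹ *ᵥ (B *ᵥ x) = B⁻¹ *ᵥ (B *ᵥ y) := by
      simpa [Matrix.mulVecLin_apply] using congrArg (fun v => B⁻¹ *ᵥ v) hxy
    rwa [mulVec_mulVec, mulVec_mulVec, Matrix.nonsing_inv_mul B hB, one_mulVec, one_mulVec] at h1
  exact (LinearEquiv.finrank_eq (Submodule.equivMapOfInjective _ hinj N)).symm

/-- Membership in `Mset` for a diagonal matrix. -/
lemma mem_Mset_diag {n m : ℕ} (D : Matrix (Fin n) (Fin m) ℤ)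
    (hdiag : ∀ (i : Fin n) (j : Fin m), ((i : ℕ) ≠ (j : ℕ)) → D i j = 0) (j : ℕ)
    (x : Fin m → ℤ_[p]) :
    x ∈ Mset p n m D j ↔ ∀ k : Fin m, (p : ℤ_[p]) ^ j ∣ ((dDiag n D k : ℤ) : ℤ_[p]) * x k := by
  have hentry : ∀ (i : Fin n),
      ((D.map (Int.cast : ℤ → ℤ_[p])) *ᵥ x) i
        = ∑ t, ((D i t : ℤ) : ℤ_[p]) * x t := by
    intro i
    rfl
  constructor
  · intro hx k
    by_cases hk : (k : ℕ) < n
    · have hi := hx ⟨(k : ℕ), hk⟩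
      have hsum : ((D.map (Int.cast : ℤ → ℤ_[p])) *ᵥ x) ⟨(k : ℕ), hk⟩
          = ((dDiag n D k : ℤ) : ℤ_[p]) * x k := by
        rw [hentry ⟨(k : ℕ), hk⟩]
        rw [Finset.sum_eq_single k]
        · rw [dDiag, dif_pos hk]
        · intro b _ hb
          have : D ⟨(k : ℕ), hk⟩ b = 0 := by
            apply hdiag
            simpa using fun h => hb (Fin.ext h.symm)
          rw [this]; simp
        · intro h; exact absurd (Finset.mem_univ k) h
      rwa [hsum] at hi
    · rw [dDiag, dif_neg hk]
      simp
  · intro hx i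
    by_cases hi : (i : ℕ) < m
    · have hsum : ((D.map (Int.cast : ℤ → ℤ_[p])) *ᵥ x) i
          = ((dDiag n D ⟨(i : ℕ), hi⟩ : ℤ) : ℤ_[p]) * x ⟨(i : ℕ), hi⟩ := by
        rw [hentry i]
        rw [Finset.sum_eq_single (⟨(i : ℕ), hi⟩ : Fin m)]
        · have hin : ((⟨(i : ℕ), hi⟩ : Fin m) : ℕ) < n := i.isLt
          rw [dDiag, dif_pos hin]
        · intro b _ hb
          have : D i b = 0 := by
            apply hdiag
            intro h
            exact hb (Fin.ext h.symm)
          rw [this]; simp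
        · intro h; exact absurd (Finset.mem_univ _) h
      rw [hsum]
      exact hx _
    · have : ((D.map (Int.cast : ℤ → ℤ_[p])) *ᵥ x) i = 0 := by
        rw [hentry i]
        apply Finset.sum_eq_zero
        intro b _
        have : D i b = 0 := hdiag i b (by omega)
        rw [this]; simp
      rw [this]
      exact dvd_zero _

lemma toZMod_eq_zero_of_dvd (x : ℤ_[p]) (h : (p : ℤ_[p]) ∣ x) : PadicInt.toZMod x = 0 := by
  rw [← RingHom.mem_ker, PadicInt.ker_toZMod, PadicInt.maximalIdeal_eq_span_p,
    Ideal.mem_span_singleton]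
  exact h

lemma isUnit_of_not_dvd (x : ℤ_[p]) (h : ¬ (p : ℤ_[p]) ∣ x) : IsUnit x := by
  rw [PadicInt.isUnit_iff]
  exact le_antisymm (PadicInt.norm_le_one x)
    (not_lt.mp fun hl => h ((PadicInt.norm_lt_one_iff_dvd x).mp hl))

/-- The reduction of `Mset D j` for a diagonal `D` is spanned by the standard basis
vectors at the columns where the diagonal entry is divisible by `p^j`. -/
lemma redBar_Mset_diag {n m : ℕ} (D : Matrix (Fin n) (Fin m) ℤ)
    (hdiag : ∀ (i : Fin n) (j : Fin m), ((i : ℕ) ≠ (j : ℕ)) → D i j = 0) (j : ℕ) :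
    redBar p m (Mset p n m D j)
      = Submodule.span (ZMod p)
          ((fun k => Pi.single k (1 : ZMod p)) '' {k : Fin m | (p : ℤ) ^ j ∣ dDiag n D k}) := by
  classical
  apply le_antisymm
  · rw [redBar, Submodule.span_le]
    rintro _ ⟨x, hx, rfl⟩
    rw [mem_Mset_diag D hdiag j] at hx
    have hrepr : (fun i => PadicInt.toZMod (x i))
        = ∑ k : Fin m, Pi.single k (PadicInt.toZMod (x k)) := by
      rw [Finset.univ_sum_single (fun i => PadicInt.toZMod (x i))]
    beta_reduce
    rw [hrepr]
    apply Submodule.sum_mem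
    intro k _
    by_cases hk : (p : ℤ) ^ j ∣ dDiag n D k
    · have : (Pi.single k (PadicInt.toZMod (x k)) : Fin m → ZMod p)
          = (PadicInt.toZMod (x k)) • (Pi.single k (1 : ZMod p) : Fin m → ZMod p) := by
        rw [← Pi.single_smul]
        simp
      rw [this]
      exact Submodule.smul_mem _ _ (Submodule.subset_span ⟨k, hk, rfl⟩)
    · have hnd : ¬ (p : ℤ_[p]) ^ j ∣ ((dDiag n D k : ℤ) : ℤ_[p]) := by
        rwa [PadicInt.pow_p_dvd_int_iff]
      have hzero : PadicInt.toZMod (x k) = 0 := by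
        apply toZMod_eq_zero_of_dvd
        by_contra hpx
        exact hnd ((IsUnit.dvd_mul_right (isUnit_of_not_dvd _ hpx)).mp (hx k))
      rw [hzero, Pi.single_zero]
      exact Submodule.zero_mem _
  · rw [Submodule.span_le]
    rintro _ ⟨k, hk, rfl⟩
    have hmem : (Pi.single k (1 : ℤ_[p])) ∈ Mset p n m D j := by
      rw [mem_Mset_diag D hdiag j]
      intro t
      by_cases ht : t = k
      · subst ht
        rw [Pi.single_eq_same, mul_one]
        rw [PadicInt.pow_p_dvd_int_iff]
        exact hk
      · rw [Pi.single_eq_of_ne ht, mul_zero]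
        exact dvd_zero _
    have hred : (fun i => PadicInt.toZMod (((Pi.single k (1 : ℤ_[p]) : Fin m → ℤ_[p]) i)))
        = Pi.single k (1 : ZMod p) := by
      funext i
      by_cases hik : i = k
      · subst hik; simp
      · rw [Pi.single_eq_of_ne hik, Pi.single_eq_of_ne hik]
        simp
    beta_reduce
    rw [← hred]
    exact Submodule.subset_span ⟨_, hmem, rfl⟩

lemma finrank_span_single (p m : ℕ) [Fact p.Prime] (F : Finset (Fin m)) :
    Module.finrank (ZMod p)
      (Submodule.span (ZMod p) ((fun k => Pi.single k (1 : ZMod p)) '' (↑F : Set (Fin m))))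
      = F.card := by
  classical
  have hinj : Function.Injective (fun k : Fin m => Pi.single k (1 : ZMod p)) := by
    intro a b h
    by_contra hne
    have := congrFun h a
    simp [Pi.single_apply, hne] at this
  have hli : LinearIndependent (ZMod p)
      (fun x : ((fun k => Pi.single k (1 : ZMod p)) '' (↑F : Set (Fin m))) =>
        (x : Fin m → ZMod p)) := by
    refine (linearIndepOn_iff_image (R := ZMod p) (s := (↑F : Set (Fin m)))
      (f := fun k : Fin m => Pi.single k (1 : ZMod p)) hinj.injOn).mp ?_
    unfold LinearIndepOn
    beta_reduce
    have hb := (Pi.basisFun (ZMod p) (Fin m)).linearIndependent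
    have heq : (fun x : (↑F : Set (Fin m)) => Pi.single (x : Fin m) (1 : ZMod p)) =
        (Pi.basisFun (ZMod p) (Fin m)) ∘ (fun x : (↑F : Set (Fin m)) => (x : Fin m)) := by
      funext x; simp [Pi.basisFun_apply]
    rw [heq]
    exact hb.comp _ Subtype.val_injective
  rw [finrank_span_set_eq_card hli, Set.toFinset_image,
    Finset.card_image_of_injective _ hinj]
  simp

/-- Counting the elementary-divisor multiplicity via the diagonal entries. -/
lemma elemDivCount_eq_card {n m : ℕ} (p : ℕ) [Fact p.Prime] (D : Matrix (Fin n) (Fin m) ℤ)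
    (hdiag : ∀ (i : Fin n) (j : Fin m), ((i : ℕ) ≠ (j : ℕ)) → D i j = 0) (a : ℕ) :
    elemDivCount p D a
      = ((Finset.univ.filter fun k : Fin m => (p : ℤ) ^ a ∣ dDiag n D k)
          \ (Finset.univ.filter fun k : Fin m => (p : ℤ) ^ (a + 1) ∣ dDiag n D k)).card := by
  classical
  rw [elemDivCount, Nat.card_eq_fintype_card, Fintype.card_subtype]
  apply Finset.card_bij (fun ij _ => ij.2)
  · rintro ⟨i, k⟩ hij
    simp only [Finset.mem_filter, Finset.mem_univ, true_and] at hij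
    obtain ⟨hval, hne, hdvd, hndvd⟩ := hij
    have hkn : (k : ℕ) < n := hval ▸ i.isLt
    have hd : dDiag n D k = D i k := by
      rw [dDiag, dif_pos hkn]
      congr 1
      exact Fin.ext hval.symm
    simp only [Finset.mem_sdiff, Finset.mem_filter, Finset.mem_univ, true_and]
    rw [hd]
    exact ⟨hdvd, hndvd⟩
  · rintro ⟨i, k⟩ hij ⟨i', k'⟩ hij' h
    simp only at h
    subst h
    simp only [Finset.mem_filter, Finset.mem_univ, true_and] at hij hij'
    have : i = i' := Fin.ext (hij.1.trans hij'.1.symm)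
    subst this
    rfl
  · intro k hk
    simp only [Finset.mem_sdiff, Finset.mem_filter, Finset.mem_univ, true_and] at hk
    obtain ⟨hdvd, hndvd⟩ := hk
    have hkn : (k : ℕ) < n := by
      by_contra hkn
      rw [dDiag, dif_neg hkn] at hndvd
      exact hndvd (dvd_zero _)
    refine ⟨(⟨(k : ℕ), hkn⟩, k), ?_, rfl⟩
    have hd : dDiag n D k = D ⟨(k : ℕ), hkn⟩ k := by rw [dDiag, dif_pos hkn]
    rw [hd] at hdvd hndvd
    have hne : D ⟨(k : ℕ), hkn⟩ k ≠ 0 := fun h0 => hndvd (h0 ▸ dvd_zero _)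
    exact Finset.mem_filter.mpr ⟨Finset.mem_univ _, rfl, hne, hdvd, hndvd⟩

end StmtAux

theorem stmt0 (p n m : ℕ) [Fact p.Prime] (C : Matrix (Fin n) (Fin m) ℤ)
    (P : Matrix (Fin n) (Fin n) ℤ) (Q : Matrix (Fin m) (Fin m) ℤ)
    (hP : IsUnit P.det) (hQ : IsUnit Q.det)
    (hdiag : ∀ (i : Fin n) (j : Fin m), ((i : ℕ) ≠ (j : ℕ)) → (P * C * Q) i j = 0) (j : ℕ) :
    (elemDivCount p (P * C * Q) j : ℤ)
      = Module.finrank (ZMod p) (redBar p m (Mset p n m C j))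
        - Module.finrank (ZMod p) (redBar p m (Mset p n m C (j + 1))) := by
  classical
  set D := P * C * Q with hD
  -- the reduction of Q over ZMod p
  set Qbar := (Q.map (Int.cast : ℤ → ℤ_[p])).map PadicInt.toZMod with hQbar
  have hQbarUnit : IsUnit Qbar.det := by
    have h1 : IsUnit (Q.map (Int.cast : ℤ → ℤ_[p])).det := StmtAux.isUnit_map_det Q hQ
    have h2 := (PadicInt.toZMod ).map_det (Q.map (Int.cast : ℤ → ℤ_[p]))
    rw [show (PadicInt.toZMod (p := p)).mapMatrix (Q.map (Int.cast : ℤ → ℤ_[p]))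
      = Qbar from rfl] at h2
    rw [← h2]
    exact h1.map _
  -- dimension formula for each j'
  have hdim : ∀ j' : ℕ, Module.finrank (ZMod p) (redBar p m (Mset p n m C j'))
      = (Finset.univ.filter fun k : Fin m => (p : ℤ) ^ j' ∣ dDiag n D k).card := by
    intro j'
    rw [StmtAux.Mset_eq_image p n m C P Q hP hQ j', StmtAux.redBar_image,
      StmtAux.finrank_map_mulVecLin p m Qbar hQbarUnit,
      StmtAux.redBar_Mset_diag D hdiag j']
    have hset : {k : Fin m | (p : ℤ) ^ j' ∣ dDiag n D k}
        = (↑(Finset.univ.filter fun k : Fin m => (p : ℤ) ^ j' ∣ dDiag n D k) : Set (Fin m)) := by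
      ext k; simp
    rw [hset, StmtAux.finrank_span_single]
  rw [hdim j, hdim (j + 1)]
  rw [StmtAux.elemDivCount_eq_card p D hdiag j]
  have hsub : (Finset.univ.filter fun k : Fin m => (p : ℤ) ^ (j + 1) ∣ dDiag n D k)
      ⊆ (Finset.univ.filter fun k : Fin m => (p : ℤ) ^ j ∣ dDiag n D k) := by
    intro k hk
    simp only [Finset.mem_filter, Finset.mem_univ, true_and] at hk ⊢
    exact dvd_trans (pow_dvd_pow _ (Nat.le_succ j)) hk
  rw [Finset.card_sdiff_of_subset hsub]
  rw [Nat.cast_sub (Finset.card_le_card hsub)]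
end

section
/- Let C be an n×n integer matrix with an integer eigenvalue φ of geometric multiplicity c (over ℚ_ℓ). Fix a prime ℓ dividing φ with v_ℓ(φ) = d. Then the 𝔽_ℓ-dimension of the reduction mod ℓ of M_d = { x ∈ ℤ_ℓ^n : Cx ∈ ℓ^d ℤ_ℓ^n } is at least c. -/
open Matrix

set_option maxHeartbeats 1000000 in
theorem stmt2 (p n : ℕ) [Fact p.Prime] (C : Matrix (Fin n) (Fin n) ℤ) (φ : ℤ)
    (hdvd : (p : ℤ) ∣ φ) (d : ℕ)
    (hd1 : (p : ℤ) ^ d ∣ φ) (hd2 : ¬ (p : ℤ) ^ (d + 1) ∣ φ)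
    (c : ℕ)
    (hc : c = Module.finrank ℚ_[p]
      (LinearMap.ker ((C.map (Int.cast : ℤ → ℚ_[p])).mulVecLin
        - (φ : ℚ_[p]) • (LinearMap.id : (Fin n → ℚ_[p]) →ₗ[ℚ_[p]] (Fin n → ℚ_[p]))))) :
    c ≤ Module.finrank (ZMod p) (redBar p n (Mset p n n C d)) := by
  classical
  have hp : p.Prime := Fact.out
  have hpZ : (p : ℤ_[p]) ≠ 0 := by exact_mod_cast hp.ne_zero
  -- the integral linear map and its kernel
  set gZ : (Fin n → ℤ_[p]) →ₗ[ℤ_[p]] (Fin n → ℤ_[p]) :=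
    (C.map (Int.cast : ℤ → ℤ_[p])).mulVecLin - (φ : ℤ_[p]) • LinearMap.id with hgZ
  set N : Submodule ℤ_[p] (Fin n → ℤ_[p]) := LinearMap.ker gZ with hN
  have hmem : ∀ x : Fin n → ℤ_[p],
      x ∈ N ↔ (C.map (Int.cast : ℤ → ℤ_[p])) *ᵥ x = (φ : ℤ_[p]) • x := by
    intro x
    simp [hN, hgZ, LinearMap.mem_ker, sub_eq_zero]
  clear_value gZ N
  -- basis of the kernel over the PID ℤ_[p]
  obtain ⟨r, b⟩ := Submodule.basisOfPid (Pi.basisFun ℤ_[p] (Fin n)) N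
  -- relation between the maps over ℚ_[p] and ℤ_[p]
  have hmap : (C.map (Int.cast : ℤ → ℤ_[p])).map (PadicInt.Coe.ringHom (p := p)) =
      C.map (Int.cast : ℤ → ℚ_[p]) := by
    rw [Matrix.map_map]
    exact congrArg C.map (funext fun z => PadicInt.coe_intCast z)
  have key : ∀ x : Fin n → ℤ_[p], ∀ i,
      ((C.map (Int.cast : ℤ → ℚ_[p])) *ᵥ fun j => ((x j : ℚ_[p]))) i
        = (((C.map (Int.cast : ℤ → ℤ_[p])) *ᵥ x) i : ℚ_[p]) := by
    intro x i
    rw [← hmap]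
    exact (RingHom.map_mulVec _ _ _ i).symm
  -- Step A : c ≤ r
  set K := LinearMap.ker ((C.map (Int.cast : ℤ → ℚ_[p])).mulVecLin
        - (φ : ℚ_[p]) • (LinearMap.id : (Fin n → ℚ_[p]) →ₗ[ℚ_[p]] (Fin n → ℚ_[p]))) with hK
  have hKmem : ∀ v : Fin n → ℚ_[p],
      v ∈ K ↔ (C.map (Int.cast : ℤ → ℚ_[p])) *ᵥ v = (φ : ℚ_[p]) • v := by
    intro v
    simp [hK, LinearMap.mem_ker, sub_eq_zero]
  clear_value K
  set w : Fin r → (Fin n → ℚ_[p]) := fun i j => ((b i : Fin n → ℤ_[p]) j : ℚ_[p]) with hw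
  have hspan : K ≤ Submodule.span ℚ_[p] (Set.range w) := by
    intro v hv
    have hvker : (C.map (Int.cast : ℤ → ℚ_[p])) *ᵥ v = (φ : ℚ_[p]) • v := (hKmem v).1 hv
    obtain ⟨s, hs⟩ := IsLocalization.exist_integer_multiples_of_finite
      (nonZeroDivisors ℤ_[p]) v
    choose y hy using hs
    have hyv : ∀ j, (y j : ℚ_[p]) = ((s : ℤ_[p]) : ℚ_[p]) * v j := by
      intro j
      have := hy j
      rw [PadicInt.algebraMap_apply] at this
      rw [this, Algebra.smul_def, PadicInt.algebraMap_apply]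
    -- y lies in the kernel over ℤ_[p]
    have hyN : y ∈ N := by
      rw [hmem]
      funext i
      apply Subtype.coe_injective
      have h2 := key y i
      have h3 : (fun j => ((y j : ℚ_[p]))) = ((s : ℤ_[p]) : ℚ_[p]) • v := by
        funext j; rw [hyv j]; rfl
      rw [h3] at h2
      have h4 : ((C.map (Int.cast : ℤ → ℚ_[p])) *ᵥ (((s : ℤ_[p]) : ℚ_[p]) • v)) i
          = ((s : ℤ_[p]) : ℚ_[p]) * (((C.map (Int.cast : ℤ → ℚ_[p])) *ᵥ v) i) := by
        rw [Matrix.mulVec_smul]; rfl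
      have h5 : ((((C.map (Int.cast : ℤ → ℤ_[p])) *ᵥ y) i : ℤ_[p]) : ℚ_[p])
          = (φ : ℚ_[p]) * ((y i : ℚ_[p])) := by
        rw [← h2, h4, hvker]
        rw [hyv i]
        simp [Pi.smul_apply, smul_eq_mul]
        ring
      show ((((C.map (Int.cast : ℤ → ℤ_[p])) *ᵥ y) i : ℤ_[p]) : ℚ_[p])
        = ((((φ : ℤ_[p]) • y) i : ℤ_[p]) : ℚ_[p])
      rw [h5, show ((φ : ℤ_[p]) • y) i = (φ : ℤ_[p]) * y i from rfl]
      push_cast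
      ring
    -- express y in terms of the basis
    have hyrepr : y = ∑ i, (b.repr ⟨y, hyN⟩ i) • ((b i : Fin n → ℤ_[p])) := by
      have h6 := congrArg (N.subtype) (b.sum_repr ⟨y, hyN⟩).symm
      rw [map_sum] at h6
      exact h6.trans (Finset.sum_congr rfl fun i _ => _root_.map_smul _ _ _)
    have hcoey : (fun j => ((y j : ℚ_[p])))
        = ∑ i, (((b.repr ⟨y, hyN⟩ i) : ℤ_[p]) : ℚ_[p]) • w i := by
      funext j
      have h1 : y j = ∑ i, (b.repr ⟨y, hyN⟩ i) * ((b i : Fin n → ℤ_[p]) j) := by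
        conv_lhs => rw [hyrepr]
        simp [Finset.sum_apply]
      have h2 : ((y j : ℚ_[p])) = PadicInt.Coe.ringHom (p := p) (y j) := rfl
      rw [h2, h1, map_sum]
      simp [hw, Finset.sum_apply, smul_eq_mul]
      rfl
    have hsne : ((s : ℤ_[p]) : ℚ_[p]) ≠ 0 := by
      rw [PadicInt.coe_ne_zero]
      exact nonZeroDivisors.coe_ne_zero s
    have hv' : v = (((s : ℤ_[p]) : ℚ_[p]))⁻¹ • (fun j => ((y j : ℚ_[p]))) := by
      funext j
      rw [Pi.smul_apply, hyv j, smul_eq_mul]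
      field_simp
    rw [hv', hcoey]
    exact Submodule.smul_mem _ _ (Submodule.sum_mem _ fun i _ =>
      Submodule.smul_mem _ _ (Submodule.subset_span ⟨i, rfl⟩))
  have hcr : c ≤ r := by
    rw [hc]
    calc Module.finrank ℚ_[p] K
        ≤ Module.finrank ℚ_[p] (Submodule.span ℚ_[p] (Set.range w)) :=
          Submodule.finrank_mono hspan
      _ ≤ r := by simpa [Set.finrank] using finrank_range_le_card (R := ℚ_[p]) w
  -- Step B : the reductions of the basis vectors are linearly independent
  set u : Fin r → (Fin n → ZMod p) :=
    fun i => fun j => PadicInt.toZMod ((b i : Fin n → ℤ_[p]) j) with hu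
  have hindep : LinearIndependent (ZMod p) u := by
    rw [Fintype.linearIndependent_iff]
    intro a ha i
    set A : Fin r → ℤ_[p] := fun i => ((a i).val : ℤ_[p]) with hA
    have hAa : ∀ i, PadicInt.toZMod (A i) = a i := by
      intro i
      simp [hA, map_natCast, ZMod.natCast_val, ZMod.cast_id]
    set Y : N := ∑ i, A i • b i with hY
    have hYcoord : ∀ j, PadicInt.toZMod ((Y : Fin n → ℤ_[p]) j) = 0 := by
      intro j
      have h1 : ((Y : Fin n → ℤ_[p]) j) = ∑ i, A i * ((b i : Fin n → ℤ_[p]) j) := by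
        have := congrArg (N.subtype) hY
        simp only [map_sum, _root_.map_smul] at this
        rw [show ((Y : Fin n → ℤ_[p])) = N.subtype Y from rfl, this]
        simp [Finset.sum_apply]
      rw [h1, map_sum]
      have h2 := congrFun ha j
      simp only [Finset.sum_apply, Pi.smul_apply, smul_eq_mul, Pi.zero_apply, hu] at h2
      simpa [_root_.map_mul, hAa] using h2
    have hdvd' : ∀ j, ∃ z, (Y : Fin n → ℤ_[p]) j = (p : ℤ_[p]) * z := by
      intro j
      have h3 := hYcoord j
      rw [← RingHom.mem_ker, PadicInt.ker_toZMod, PadicInt.maximalIdeal_eq_span_p,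
        Ideal.mem_span_singleton] at h3
      obtain ⟨z, hz⟩ := h3
      exact ⟨z, hz⟩
    choose z hz using hdvd'
    have hYz : (Y : Fin n → ℤ_[p]) = (p : ℤ_[p]) • z := funext fun j => by
      rw [hz j]; rfl
    have hzN : z ∈ N := by
      have hYmem := (hmem _).1 Y.2
      rw [hYz, Matrix.mulVec_smul] at hYmem
      rw [hmem]
      funext j
      have h10 := congrFun hYmem j
      simp only [Pi.smul_apply, smul_eq_mul] at h10 ⊢
      apply mul_left_cancel₀ hpZ
      rw [h10]
      ring
    have hYZ : Y = (p : ℤ_[p]) • (⟨z, hzN⟩ : N) := by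
      apply Subtype.ext; rw [hYz]; rfl
    have h1 : b.repr Y i = A i := by
      rw [hY]
      exact congrFun (b.repr_sum_self A) i
    have h2 := congrArg (fun t => b.repr t i) hYZ
    simp only [_root_.map_smul, Finsupp.smul_apply, smul_eq_mul] at h2
    rw [h1] at h2
    have : PadicInt.toZMod (A i) = 0 := by
      rw [h2]
      simp
    rw [hAa i] at this
    exact this
  -- Step C : each basis vector lies in Mset and its reduction in redBar
  have hbM : ∀ i, (b i : Fin n → ℤ_[p]) ∈ Mset p n n C d := by
    intro i i0
    have h7 := (hmem _).1 (b i).2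
    rw [h7]
    have h8 : (p : ℤ_[p]) ^ d ∣ (φ : ℤ_[p]) := by
      obtain ⟨t, ht⟩ := hd1
      exact ⟨(t : ℤ_[p]), by exact_mod_cast congrArg (Int.cast : ℤ → ℤ_[p]) ht⟩
    exact Dvd.dvd.mul_right h8 _
  have humem : ∀ i, u i ∈ redBar p n (Mset p n n C d) := fun i =>
    Submodule.subset_span ⟨(b i : Fin n → ℤ_[p]), hbM i, rfl⟩
  set u' : Fin r → (redBar p n (Mset p n n C d)) := fun i => ⟨u i, humem i⟩ with hu'
  have hindep' : LinearIndependent (ZMod p) u' :=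
    LinearIndependent.of_comp (redBar p n (Mset p n n C d)).subtype hindep
  calc c ≤ r := hcr
    _ = Fintype.card (Fin r) := (Fintype.card_fin r).symm
    _ ≤ Module.finrank (ZMod p) (redBar p n (Mset p n n C d)) :=
        hindep'.fintype_card_le_finrank
end

section
/- Let q = p^t be a prime power and V a 2m-dimensional symplectic space over 𝔽_q (m ≥ 2). The polar graph Γ_s(q,m), whose vertices are the 1-dimensional subspaces of V with two distinct vertices adjacent iff they are orthogonal with respect to the symplectic form, is a strongly regular graph with parameters v = (q^{2m} − 1)/(q − 1), k = q·(q^{m−1}−1)/(q−1)·(q^{m−1}+1), λ = (q^{2m−2}−1)/(q−1) − 2, μ = (q^{2m−2}−1)/(q−1). -/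
open Matrix

/-- The points of the polar space: (isotropic) 1-dimensional subspaces of `F^n`.
For a symplectic space every 1-dimensional subspace is isotropic. -/
abbrev polarVertex (F : Type*) [Field F] (n : ℕ) :=
  {W : Submodule F (Fin n → F) // Module.finrank F W = 1}

/-- The polar graph: two distinct 1-spaces are adjacent iff they are orthogonal
with respect to the form `B`. -/
def polarGraph {F : Type*} [Field F] {n : ℕ}
    (B : (Fin n → F) →ₗ[F] (Fin n → F) →ₗ[F] F) : SimpleGraph (polarVertex F n) where
  Adj X Y := X ≠ Y ∧ ∀ x ∈ X.1, ∀ y ∈ Y.1, B x y = 0 ∧ B y x = 0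
  symm := by
    constructor
    rintro X Y ⟨hne, hB⟩
    exact ⟨hne.symm, fun y hy x hx => ⟨(hB x hx y hy).2, (hB x hx y hy).1⟩⟩
  loopless := by constructor; rintro X ⟨hne, -⟩; exact hne rfl

noncomputable instance polarVertexFintype (F : Type*) [Field F] [Fintype F] (n : ℕ) :
    Fintype (polarVertex F n) := by
  have : Finite (Submodule F (Fin n → F)) :=
    Finite.of_injective (fun W => (W : Set (Fin n → F))) SetLike.coe_injective
  exact Fintype.ofFinite _

noncomputable instance polarGraphDecRel {F : Type*} [Field F] {n : ℕ}
    (B : (Fin n → F) →ₗ[F] (Fin n → F) →ₗ[F] F) : DecidableRel (polarGraph B).Adj :=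
  fun _ _ => Classical.dec _

section CardAux

variable {F : Type*} [Field F] [Fintype F]

lemma card_ne_zero_aux (V : Type*) [AddCommGroup V] [Module F V] [FiniteDimensional F V] :
    Nat.card {v : V // v ≠ 0} = Fintype.card F ^ Module.finrank F V - 1 := by
  classical
  have hfin : Finite V := Module.finite_of_finite F
  have hft : Fintype V := Fintype.ofFinite V
  have h1 : Nat.card V = Nat.card {v : V // v = 0} + Nat.card {v : V // ¬ v = 0} := by
    rw [← Nat.card_sum]
    exact Nat.card_congr (Equiv.sumCompl (fun v : V => v = 0)).symm
  have h2 : Nat.card {v : V // v = 0} = 1 := by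
    have : Unique {v : V // v = 0} := ⟨⟨⟨0, rfl⟩⟩, fun x => Subtype.ext x.2⟩
    exact Nat.card_unique
  have h3 : Nat.card V = Fintype.card F ^ Module.finrank F V := by
    rw [Nat.card_eq_fintype_card]
    exact Module.card_eq_pow_finrank
  have h4 : Nat.card {v : V // ¬ v = 0} = Nat.card {v : V // v ≠ 0} := rfl
  omega

lemma card_lines_mul (V : Type*) [AddCommGroup V] [Module F V] [FiniteDimensional F V] :
    Nat.card {U : Submodule F V // Module.finrank F ↥U = 1} * (Fintype.card F - 1)
      = Fintype.card F ^ Module.finrank F V - 1 := by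
  classical
  have hfin : Finite V := Module.finite_of_finite F
  have : Finite (Submodule F V) :=
    Finite.of_injective (fun W => (W : Set V)) SetLike.coe_injective
  have hftV : Fintype V := Fintype.ofFinite V
  have hftL : Fintype {U : Submodule F V // Module.finrank F ↥U = 1} := Fintype.ofFinite _
  have hftN : Fintype {v : V // v ≠ 0} := Fintype.ofFinite _
  set f : {v : V // v ≠ 0} → {U : Submodule F V // Module.finrank F ↥U = 1} :=
    fun v => ⟨Submodule.span F {v.1}, finrank_span_singleton v.2⟩ with hf
  have hfib : ∀ U : {U : Submodule F V // Module.finrank F ↥U = 1},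
      Nat.card {w : {v : V // v ≠ 0} // f w = U} = Fintype.card F - 1 := by
    intro U
    have e : {w : {v : V // v ≠ 0} // f w = U} ≃ {x : ↥U.1 // x ≠ 0} :=
      { toFun := fun w => ⟨⟨w.1.1, by
          have h : Submodule.span F {w.1.1} = U.1 := congrArg Subtype.val w.2
          exact h ▸ Submodule.mem_span_singleton_self _⟩,
          fun h => w.1.2 (congrArg Subtype.val h)⟩
        invFun := fun x => ⟨⟨x.1.1, fun h => x.2 (Subtype.ext h)⟩, Subtype.ext
          (Submodule.eq_of_le_of_finrank_eq
            ((Submodule.span_singleton_le_iff_mem _ _).2 x.1.2)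
            (by rw [finrank_span_singleton (fun h => x.2 (Subtype.ext h)), U.2]))⟩
        left_inv := fun w => Subtype.ext (Subtype.ext rfl)
        right_inv := fun x => Subtype.ext (Subtype.ext rfl) }
    rw [Nat.card_congr e, card_ne_zero_aux (F := F) ↥U.1, U.2, pow_one]
  have key : Nat.card {v : V // v ≠ 0}
      = Nat.card {U : Submodule F V // Module.finrank F ↥U = 1} * (Fintype.card F - 1) := by
    rw [Nat.card_eq_fintype_card, Nat.card_eq_fintype_card,
      ← Fintype.card_congr (Equiv.sigmaFiberEquiv f), Fintype.card_sigma]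
    have hfib' : ∀ U, Fintype.card {w : {v : V // v ≠ 0} // f w = U} = Fintype.card F - 1 :=
      fun U => by rw [← Nat.card_eq_fintype_card]; exact hfib U
    simp [hfib', Finset.sum_const, Finset.card_univ, mul_comm]
  rw [← key, card_ne_zero_aux (F := F) V]

lemma card_polar_le_mul {n : ℕ} (W : Submodule F (Fin n → F)) :
    Nat.card {Z : polarVertex F n // Z.1 ≤ W} * (Fintype.card F - 1)
      = Fintype.card F ^ Module.finrank F ↥W - 1 := by
  have e : {U : Submodule F ↥W // Module.finrank F ↥U = 1} ≃ {Z : polarVertex F n // Z.1 ≤ W} :=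
    { toFun := fun U => ⟨⟨U.1.map W.subtype, by
        rw [Submodule.finrank_map_subtype_eq]; exact U.2⟩, Submodule.map_subtype_le W U.1⟩
      invFun := fun Z => ⟨Z.1.1.comap W.subtype, by
        have hmap : (Z.1.1.comap W.subtype).map W.subtype = Z.1.1 := by
          rw [Submodule.map_comap_subtype]; exact inf_eq_right.2 Z.2
        rw [← Submodule.finrank_map_subtype_eq, hmap]; exact Z.1.2⟩
      left_inv := fun U => by
        apply Subtype.ext
        simp [Submodule.comap_map_eq, Submodule.ker_subtype]
      right_inv := fun Z => by
        apply Subtype.ext; apply Subtype.ext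
        show (Z.1.1.comap W.subtype).map W.subtype = Z.1.1
        rw [Submodule.map_comap_subtype]; exact inf_eq_right.2 Z.2 }
  rw [← Nat.card_congr e, card_lines_mul]

end CardAux

lemma k_arith (q c₁ m : ℕ) (hq : 2 ≤ q) (hm : 2 ≤ m) (h : c₁ * (q - 1) = q ^ (2 * m - 1) - 1) :
    c₁ - 1 = q * ((q ^ (m - 1) - 1) / (q - 1)) * (q ^ (m - 1) + 1) := by
  have hdvd : (q - 1) ∣ (q ^ (m - 1) - 1) := by
    simpa using Nat.sub_dvd_pow_sub_pow q 1 (m - 1)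
  obtain ⟨s, hs⟩ := hdvd
  have hs' : (q ^ (m - 1) - 1) / (q - 1) = s := by
    rw [hs]; exact Nat.mul_div_cancel_left s (by omega)
  rw [hs']
  have ha1 : 1 ≤ q ^ (m - 1) := Nat.one_le_pow _ _ (by omega)
  have hbc : q * (q ^ (m - 1) * q ^ (m - 1)) = q ^ (2 * m - 1) := by
    rw [← pow_add, ← pow_succ']; congr 1; omega
  have hqle : q ≤ q ^ (2 * m - 1) := Nat.le_self_pow (by omega) q
  have hc1 : 1 ≤ c₁ := by
    rcases Nat.eq_zero_or_pos c₁ with h0 | h0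
    · rw [h0] at h; omega
    · omega
  apply Nat.eq_of_mul_eq_mul_right (show 0 < q - 1 by omega)
  have hq1 : 1 ≤ q := by omega
  have hpow1 : 1 ≤ q ^ (2 * m - 1) := by omega
  zify [ha1, hc1, hq1, hpow1] at h hs ⊢
  zify at hbc
  linear_combination h + (q : ℤ) * (q ^ (m - 1) + 1) * hs - hbc

theorem stmt13 (q m : ℕ) (hqpp : ∃ p t : ℕ, p.Prime ∧ 0 < t ∧ q = p ^ t) (hm : 2 ≤ m)
    (F : Type*) [Field F] [Fintype F] (hcard : Fintype.card F = q)
    (B : (Fin (2 * m) → F) →ₗ[F] (Fin (2 * m) → F) →ₗ[F] F)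
    (halt : ∀ v, B v v = 0)
    (hnondeg : ∀ v, (∀ w, B v w = 0) → v = 0) :
    (polarGraph B).IsSRGWith
      ((q ^ (2 * m) - 1) / (q - 1))
      (q * ((q ^ (m - 1) - 1) / (q - 1)) * (q ^ (m - 1) + 1))
      ((q ^ (2 * m - 2) - 1) / (q - 1) - 2)
      ((q ^ (2 * m - 2) - 1) / (q - 1)) := by
  classical
  subst hcard
  have hq2 : 2 ≤ Fintype.card F := Fintype.one_lt_card
  -- skew-symmetry
  have hskew : ∀ x y : Fin (2 * m) → F, B y x = -B x y := by
    intro x y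
    have h : B y x + B x y = 0 := by
      have h0 := halt (x + y)
      simpa [map_add, LinearMap.add_apply, halt] using h0
    linear_combination h
  -- generators of 1-dimensional subspaces
  have hgen : ∀ X : polarVertex F (2 * m),
      ∃ u : Fin (2 * m) → F, u ≠ 0 ∧ X.1 = Submodule.span F {u} := by
    intro X
    have hbot : X.1 ≠ ⊥ := by
      intro h
      have h2 := X.2
      rw [h, finrank_bot] at h2
      omega
    obtain ⟨u, huX, hu0⟩ := Submodule.exists_mem_ne_zero_of_ne_bot hbot
    refine ⟨u, hu0, ?_⟩
    exact (Submodule.eq_of_le_of_finrank_eq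
      ((Submodule.span_singleton_le_iff_mem _ _).2 huX)
      (by rw [finrank_span_singleton hu0, X.2])).symm
  -- adjacency characterization
  have hadj : ∀ (X Z : polarVertex F (2 * m)) (u : Fin (2 * m) → F), u ≠ 0 →
      X.1 = Submodule.span F {u} →
      ((polarGraph B).Adj X Z ↔ (X ≠ Z ∧ Z.1 ≤ LinearMap.ker (B u))) := by
    intro X Z u hu hX
    constructor
    · rintro ⟨hne, h⟩
      refine ⟨hne, fun z hz => ?_⟩
      exact LinearMap.mem_ker.2
        (h u (by rw [hX]; exact Submodule.mem_span_singleton_self u) z hz).1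
    · rintro ⟨hne, h⟩
      refine ⟨hne, ?_⟩
      intro x hx z hz
      rw [hX, Submodule.mem_span_singleton] at hx
      obtain ⟨c, rfl⟩ := hx
      have h1 : B u z = 0 := LinearMap.mem_ker.1 (h hz)
      constructor
      · simp [_root_.map_smul, LinearMap.smul_apply, h1]
      · rw [hskew (c • u) z]
        simp [_root_.map_smul, LinearMap.smul_apply, h1]
  -- nonzero vectors give nonzero functionals
  have hBne : ∀ u : Fin (2 * m) → F, u ≠ 0 → B u ≠ 0 := by
    intro u hu h0
    exact hu (hnondeg u (fun w => by rw [h0]; rfl))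
  -- kernels are hyperplanes
  have hker : ∀ u : Fin (2 * m) → F, u ≠ 0 →
      Module.finrank F ↥(LinearMap.ker (B u)) + 1 = 2 * m := by
    intro u hu
    have h := LinearMap.finrank_range_add_finrank_ker (B u)
    have hr : Module.finrank F ↥(LinearMap.range (B u)) = 1 := by
      have h1 : LinearMap.range (B u) ≠ ⊥ := by
        rw [ne_eq, LinearMap.range_eq_bot]; exact hBne u hu
      have h2 : Module.finrank F ↥(LinearMap.range (B u)) ≤ 1 := by
        have := Submodule.finrank_le (LinearMap.range (B u))
        simpa [Module.finrank_self] using this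
      have h3 : Module.finrank F ↥(LinearMap.range (B u)) ≠ 0 := by
        rw [ne_eq, Submodule.finrank_eq_zero]; exact h1
      omega
    rw [hr, Module.finrank_pi, Fintype.card_fin] at h
    omega
  -- kernel comparison
  have hkerle : ∀ u v : Fin (2 * m) → F, u ≠ 0 →
      LinearMap.ker (B u) ≤ LinearMap.ker (B v) → v ∈ Submodule.span F {u} := by
    intro u v hu hle
    have hx : ∃ x, B u x ≠ 0 := by
      by_contra h
      push_neg at h
      exact hBne u hu (LinearMap.ext fun w => by simpa using h w)
    obtain ⟨x, hx⟩ := hx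
    set c := B v x / B u x with hc
    set w := v - c • u with hw
    have hwz : ∀ z, B w z = 0 := by
      have hxk : x ∉ LinearMap.ker (B u) := by simpa [LinearMap.mem_ker] using hx
      have hxsup : x ∈ LinearMap.ker (B u) ⊔ Submodule.span F {x} :=
        Submodule.mem_sup_right (Submodule.mem_span_singleton_self x)
      have hlt : LinearMap.ker (B u) < LinearMap.ker (B u) ⊔ Submodule.span F {x} :=
        lt_of_le_not_ge le_sup_left (fun h2 => hxk (h2 hxsup))
      have h1 := Submodule.finrank_lt_finrank_of_lt hlt
      have h2 := Submodule.finrank_le (LinearMap.ker (B u) ⊔ Submodule.span F {x})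
      rw [Module.finrank_pi, Fintype.card_fin] at h2
      have h3 := hker u hu
      have hsup : LinearMap.ker (B u) ⊔ Submodule.span F {x} = ⊤ := by
        apply Submodule.eq_top_of_finrank_eq
        rw [Module.finrank_pi, Fintype.card_fin]
        omega
      have hker_top : LinearMap.ker (B u) ⊔ Submodule.span F {x} ≤ LinearMap.ker (B w) := by
        rw [sup_le_iff]
        constructor
        · intro z hz
          have hz1 : B u z = 0 := LinearMap.mem_ker.1 hz
          have hz2 : B v z = 0 := LinearMap.mem_ker.1 (hle hz)
          simp [hw, map_sub, _root_.map_smul, LinearMap.sub_apply, LinearMap.smul_apply,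
            LinearMap.mem_ker, hz1, hz2]
        · rw [Submodule.span_singleton_le_iff_mem]
          simp only [hw, LinearMap.mem_ker, map_sub, _root_.map_smul, LinearMap.sub_apply,
            LinearMap.smul_apply, smul_eq_mul, hc]
          field_simp
          ring
      intro z
      have hz : z ∈ LinearMap.ker (B w) := hker_top (hsup ▸ Submodule.mem_top)
      exact LinearMap.mem_ker.1 hz
    have hw0 : w = 0 := hnondeg w hwz
    have hv : v = c • u := by rwa [hw, sub_eq_zero] at hw0
    rw [hv]
    exact Submodule.smul_mem _ _ (Submodule.mem_span_singleton_self u)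
  -- intersection of two distinct kernels has codimension 2
  have hinf : ∀ u v : Fin (2 * m) → F, u ≠ 0 → v ≠ 0 →
      Submodule.span F {u} ≠ Submodule.span F {v} →
      Module.finrank F ↥(LinearMap.ker (B u) ⊓ LinearMap.ker (B v)) + 2 = 2 * m := by
    intro u v hu hv hne
    have h1 : ¬ LinearMap.ker (B v) ≤ LinearMap.ker (B u) := by
      intro h
      have hmem := hkerle v u hv h
      have hle : Submodule.span F {u} ≤ Submodule.span F {v} :=
        (Submodule.span_singleton_le_iff_mem _ _).2 hmem
      exact hne (Submodule.eq_of_le_of_finrank_eq hle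
        (by rw [finrank_span_singleton hu, finrank_span_singleton hv]))
    have hlt : LinearMap.ker (B u) < LinearMap.ker (B u) ⊔ LinearMap.ker (B v) :=
      lt_of_le_not_ge le_sup_left (fun h2 => h1 (le_sup_right.trans h2))
    have hd := Submodule.finrank_lt_finrank_of_lt hlt
    have hsle := Submodule.finrank_le (LinearMap.ker (B u) ⊔ LinearMap.ker (B v))
    rw [Module.finrank_pi, Fintype.card_fin] at hsle
    have h3 := hker u hu
    have h4 := hker v hv
    have h5 := Submodule.finrank_sup_add_finrank_inf_eq (LinearMap.ker (B u)) (LinearMap.ker (B v))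
    omega
  -- the counting helper
  have hcount : ∀ W : Submodule F (Fin (2 * m) → F), ∀ d : ℕ,
      Module.finrank F ↥W = d →
      ({Z : polarVertex F (2 * m) | Z.1 ≤ W} : Set (polarVertex F (2 * m))).ncard
        * (Fintype.card F - 1) = Fintype.card F ^ d - 1 := by
    intro W d hd
    rw [← Nat.card_coe_set_eq]
    have h := card_polar_le_mul (F := F) W
    rw [hd] at h
    exact h
  constructor
  · -- vertex count
    rw [← Nat.card_eq_fintype_card]
    have h := card_lines_mul (F := F) (Fin (2 * m) → F)
    rw [Module.finrank_pi, Fintype.card_fin] at h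
    exact (Nat.div_eq_of_eq_mul_left (by omega) h.symm).symm
  · -- regularity
    intro X
    obtain ⟨u, hu, hX⟩ := hgen X
    rw [← SimpleGraph.card_neighborSet_eq_degree, ← Nat.card_eq_fintype_card]
    have hXmem : X ∈ {Z : polarVertex F (2 * m) | Z.1 ≤ LinearMap.ker (B u)} := by
      show X.1 ≤ _
      rw [hX, Submodule.span_singleton_le_iff_mem]
      exact LinearMap.mem_ker.2 (halt u)
    have hset : (polarGraph B).neighborSet X
        = {Z : polarVertex F (2 * m) | Z.1 ≤ LinearMap.ker (B u)} \ {X} := by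
      ext Z
      simp only [SimpleGraph.mem_neighborSet, Set.mem_diff, Set.mem_setOf_eq,
        Set.mem_singleton_iff, hadj X Z u hu hX]
      exact ⟨fun h => ⟨h.2, fun e => h.1 e.symm⟩, fun h => ⟨fun e => h.2 e.symm, h.1⟩⟩
    rw [hset, Nat.card_coe_set_eq,
      Set.ncard_diff (Set.singleton_subset_iff.2 hXmem) (Set.toFinite _), Set.ncard_singleton]
    have hSc := hcount (LinearMap.ker (B u)) (2 * m - 1) (by have := hker u hu; omega)
    exact k_arith (Fintype.card F) _ m hq2 hm hSc
  · -- adjacent pairs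
    intro X Y hAdj
    obtain ⟨u, hu, hX⟩ := hgen X
    obtain ⟨v, hv, hY⟩ := hgen Y
    have hne : X ≠ Y := hAdj.1
    have hBuv : B u v = 0 := by
      have h := ((hadj X Y u hu hX).1 hAdj).2
      have hvY : v ∈ Y.1 := by rw [hY]; exact Submodule.mem_span_singleton_self v
      exact LinearMap.mem_ker.1 (h hvY)
    have hBvu : B v u = 0 := by rw [hskew u v, hBuv, neg_zero]
    have hspanne : Submodule.span F {u} ≠ Submodule.span F {v} := by
      intro h
      exact hne (Subtype.ext (hX.trans (h.trans hY.symm)))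
    have hXK : X.1 ≤ LinearMap.ker (B u) ⊓ LinearMap.ker (B v) := by
      rw [hX, Submodule.span_singleton_le_iff_mem]
      exact Submodule.mem_inf.2 ⟨LinearMap.mem_ker.2 (halt u), LinearMap.mem_ker.2 hBvu⟩
    have hYK : Y.1 ≤ LinearMap.ker (B u) ⊓ LinearMap.ker (B v) := by
      rw [hY, Submodule.span_singleton_le_iff_mem]
      exact Submodule.mem_inf.2 ⟨LinearMap.mem_ker.2 hBuv, LinearMap.mem_ker.2 (halt v)⟩
    have hCN : (polarGraph B).commonNeighbors X Y
        = {Z : polarVertex F (2 * m) | Z.1 ≤ LinearMap.ker (B u) ⊓ LinearMap.ker (B v)}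
          \ {X, Y} := by
      ext Z
      simp only [SimpleGraph.mem_commonNeighbors, hadj X Z u hu hX, hadj Y Z v hv hY,
        Set.mem_diff, Set.mem_setOf_eq, Set.mem_insert_iff, Set.mem_singleton_iff, le_inf_iff]
      constructor
      · rintro ⟨⟨h1, h2⟩, h3, h4⟩
        exact ⟨⟨h2, h4⟩, fun h => h.elim (fun e => h1 e.symm) (fun e => h3 e.symm)⟩
      · rintro ⟨⟨h2, h4⟩, h5⟩
        exact ⟨⟨fun e => h5 (Or.inl e.symm), h2⟩, ⟨fun e => h5 (Or.inr e.symm), h4⟩⟩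
    have hsub : ({X, Y} : Set (polarVertex F (2 * m)))
        ⊆ {Z : polarVertex F (2 * m) | Z.1 ≤ LinearMap.ker (B u) ⊓ LinearMap.ker (B v)} := by
      intro z hz
      simp only [Set.mem_insert_iff, Set.mem_singleton_iff] at hz
      rcases hz with rfl | rfl
      · exact hXK
      · exact hYK
    rw [← Nat.card_eq_fintype_card, hCN, Nat.card_coe_set_eq,
      Set.ncard_diff hsub (Set.toFinite _), Set.ncard_pair hne]
    have hSc := hcount (LinearMap.ker (B u) ⊓ LinearMap.ker (B v)) (2 * m - 2)
      (by have := hinf u v hu hv hspanne; omega)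
    have hdiv : (Fintype.card F ^ (2 * m - 2) - 1) / (Fintype.card F - 1)
        = ({Z : polarVertex F (2 * m) |
            Z.1 ≤ LinearMap.ker (B u) ⊓ LinearMap.ker (B v)} : Set _).ncard :=
      Nat.div_eq_of_eq_mul_left (by omega) hSc.symm
    rw [hdiv]
  · -- non-adjacent pairs
    intro X Y hne hnadj
    obtain ⟨u, hu, hX⟩ := hgen X
    obtain ⟨v, hv, hY⟩ := hgen Y
    have hYnk : ¬ (Y.1 ≤ LinearMap.ker (B u)) := by
      intro h
      exact hnadj ((hadj X Y u hu hX).2 ⟨hne, h⟩)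
    have hBuv : B u v ≠ 0 := by
      intro h0
      apply hYnk
      rw [hY, Submodule.span_singleton_le_iff_mem]
      exact LinearMap.mem_ker.2 h0
    have hspanne : Submodule.span F {u} ≠ Submodule.span F {v} := by
      intro h
      exact hne (Subtype.ext (hX.trans (h.trans hY.symm)))
    have huX : u ∈ X.1 := by rw [hX]; exact Submodule.mem_span_singleton_self u
    have hvY : v ∈ Y.1 := by rw [hY]; exact Submodule.mem_span_singleton_self v
    have hCN : (polarGraph B).commonNeighbors X Y
        = {Z : polarVertex F (2 * m) | Z.1 ≤ LinearMap.ker (B u) ⊓ LinearMap.ker (B v)} := by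
      ext Z
      simp only [SimpleGraph.mem_commonNeighbors, hadj X Z u hu hX, hadj Y Z v hv hY,
        Set.mem_setOf_eq, le_inf_iff]
      constructor
      · rintro ⟨⟨h1, h2⟩, h3, h4⟩
        exact ⟨h2, h4⟩
      · rintro ⟨h2, h4⟩
        refine ⟨⟨?_, h2⟩, ⟨?_, h4⟩⟩
        · intro e
          apply hBuv
          have hu2 : u ∈ LinearMap.ker (B v) := h4 (e ▸ huX)
          have : B v u = 0 := LinearMap.mem_ker.1 hu2
          have h' := hskew u v
          rw [this] at h'
          exact neg_eq_zero.1 h'.symm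
        · intro e
          apply hBuv
          exact LinearMap.mem_ker.1 (h2 (e ▸ hvY))
    rw [← Nat.card_eq_fintype_card, hCN, Nat.card_coe_set_eq]
    have hSc := hcount (LinearMap.ker (B u) ⊓ LinearMap.ker (B v)) (2 * m - 2)
      (by have := hinf u v hu hv hspanne; omega)
    exact (Nat.div_eq_of_eq_mul_left (by omega) hSc.symm).symm
end
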